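/- arXiv:2512.11150 — 2 statements merged into one kernel-verified Lean document; each statement's English description precedes it below -/
import Mathlib

section
/- Let (X, Y) be random with Y real-valued and square-integrable, let W = W(X) ≥ 0 be X-measurable with E[W²·Var(Y|X)] < ∞, and let T be a measurable event in the σ-algebra of X with σ_T² := ess inf over T of Var(Y | X) > 0. Then Var(W·Y) ≥ σ_T² · E[W² · 1_T]. Combined with the weight second-moment identity, if W = dπ'/dπ₀ with α = π'(T), β = π₀(T), this gives Var_{π₀}(W·Y) ≥ σ_T² · (α²/β) · (1 + χ²(π'_T ∥ π₀,T)). -/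
open MeasureTheory ProbabilityTheory

lemma CLE.integrable_mul_L2 {α : Type*} {m0 : MeasurableSpace α} {μ : Measure α}
    {f g : α → ℝ} (hf : MemLp f 2 μ) (hg : MemLp g 2 μ) :
    Integrable (fun x => f x * g x) μ := by
  have h := (hf.integrable_sq.add hg.integrable_sq).const_mul (1/2 : ℝ)
  refine Integrable.mono' h (hf.aestronglyMeasurable.mul hg.aestronglyMeasurable) ?_
  filter_upwards with x
  have h1 : ‖f x * g x‖ = |f x| * |g x| := by rw [Real.norm_eq_abs, abs_mul]
  have h2 : 2 * (|f x| * |g x|) ≤ |f x| ^ 2 + |g x| ^ 2 := by nlinarith [two_mul_le_add_sq (|f x|) (|g x|)]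
  rw [h1]
  simp only [Pi.add_apply]
  have := sq_abs (f x); have := sq_abs (g x)
  nlinarith

lemma CLE.memℒp_two_condexp {α : Type*} {m m0 : MeasurableSpace α} (hm : m ≤ m0)
    {μ : Measure α} [IsFiniteMeasure μ] {f : α → ℝ} (hf : MemLp f 2 μ) :
    MemLp (μ[f|m]) 2 μ := by
  set F := hf.toLp f with hF
  have hg2 : MemLp ((condExpL2 ℝ ℝ hm F : Lp ℝ 2 μ) : α → ℝ) 2 μ := Lp.memLp _
  have hae : ((condExpL2 ℝ ℝ hm F : Lp ℝ 2 μ) : α → ℝ) =ᵐ[μ] μ[f|m] := by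
    refine ae_eq_condExp_of_forall_setIntegral_eq hm (hf.integrable one_le_two)
      (fun s _ _ => (hg2.integrable one_le_two).integrableOn)
      (fun s hs hμs => ?_) (lpMeas.aestronglyMeasurable _)
    rw [integral_condExpL2_eq hm F hs hμs.ne]
    exact setIntegral_congr_ae (hm s hs) ((hf.coeFn_toLp).mono fun x hx _ => hx)
  exact hg2.ae_eq hae

lemma CLE.integral_indicator' {Ω : Type*} (mΩ : MeasurableSpace Ω) (μ : Measure Ω)
    {T : Set Ω} (hT : MeasurableSet T) (g : Ω → ℝ) :
    ∫ x, T.indicator g x ∂μ = ∫ x in T, g x ∂μ := integral_indicator hT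

/-- Part 1 of CLE : `σ² ∫_T W² ≤ Var(WY)`. -/
lemma CLE.part1 {Ω : Type*} {mΩ : MeasurableSpace Ω}
    (π₀ : Measure Ω) [IsProbabilityMeasure π₀]
    (mX : MeasurableSpace Ω) (hmX : mX ≤ mΩ)
    (W : Ω → ℝ)
    (hWmeas : StronglyMeasurable[mX] W)
    (Y : Ω → ℝ) (hY : MemLp Y 2 π₀)
    (hWY : MemLp (fun x => W x * Y x) 2 π₀)
    (T : Set Ω) (hT : MeasurableSet[mX] T)
    (σT : ℝ) (hσ : 0 < σT)
    (hcond : ∀ᵐ x ∂π₀, x ∈ T →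
      σT ^ 2 ≤ (π₀[(fun ω => (Y ω - (π₀[Y|mX]) ω) ^ 2)|mX]) x)
    (hint : Integrable
      (fun x => (W x) ^ 2 * (π₀[(fun ω => (Y ω - (π₀[Y|mX]) ω) ^ 2)|mX]) x) π₀) :
    σT ^ 2 * (∫ x in T, (W x) ^ 2 ∂π₀) ≤ variance (fun x => W x * Y x) π₀ := by
  set Z : Ω → ℝ := fun x => W x * Y x with hZdef
  set μY : Ω → ℝ := π₀[Y|mX] with hμYdef
  set CV : Ω → ℝ := π₀[(fun ω => (Y ω - μY ω) ^ 2)|mX] with hCVdef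
  have hYint : Integrable Y π₀ := hY.integrable one_le_two
  have hZint : Integrable Z π₀ := hWY.integrable one_le_two
  have hμY2 : MemLp μY 2 π₀ := CLE.memℒp_two_condexp hmX hY
  set m : Ω → ℝ := π₀[Z|mX] with hmdef
  have hm2 : MemLp m 2 π₀ := CLE.memℒp_two_condexp hmX hWY
  set c : ℝ := ∫ x, Z x ∂π₀ with hcdef
  -- pull-out : m =ᵐ W * μY
  have hpull : m =ᵐ[π₀] fun x => W x * μY x := by
    have := condExp_mul_of_stronglyMeasurable_left (μ := π₀) (m := mX) hWmeas
      (by simpa [Pi.mul_apply, Pi.mul_def] using hZint) hYint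
    simpa [Pi.mul_apply, Pi.mul_def] using this
  -- ∫ m = c
  have hintm : ∫ x, m x ∂π₀ = c := integral_condExp hmX
  -- ∫ Z m = ∫ m m
  have hZm_int : Integrable (fun x => Z x * m x) π₀ := CLE.integrable_mul_L2 hWY hm2
  have hmm_int : Integrable (fun x => m x * m x) π₀ := CLE.integrable_mul_L2 hm2 hm2
  have hZm : ∫ x, Z x * m x ∂π₀ = ∫ x, m x * m x ∂π₀ := by
    have h1 : π₀[fun x => m x * Z x|mX] =ᵐ[π₀] fun x => m x * m x := by
      have := condExp_mul_of_stronglyMeasurable_left (μ := π₀) (m := mX)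
        (stronglyMeasurable_condExp (f := Z))
        (by simpa [Pi.mul_apply, Pi.mul_def, mul_comm] using hZm_int) hZint
      simpa [Pi.mul_apply, Pi.mul_def] using this
    calc ∫ x, Z x * m x ∂π₀ = ∫ x, m x * Z x ∂π₀ := by simp [mul_comm]
      _ = ∫ x, (π₀[fun x => m x * Z x|mX]) x ∂π₀ :=
          (integral_condExp hmX).symm
      _ = ∫ x, m x * m x ∂π₀ := integral_congr_ae h1
  -- cross term
  have hcross : ∫ x, (Z x - m x) * (m x - c) ∂π₀ = 0 := by
    have hexp : ∀ x, (Z x - m x) * (m x - c) = Z x * m x - m x * m x - c * Z x + c * m x := by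
      intro x; ring
    have hiZ : Integrable (fun x => c * Z x) π₀ := hZint.const_mul c
    have him : Integrable (fun x => c * m x) π₀ :=
      (hm2.integrable one_le_two).const_mul c
    have i2 : Integrable (fun x => Z x * m x - m x * m x) π₀ := hZm_int.sub hmm_int
    have i1 : Integrable (fun x => Z x * m x - m x * m x - c * Z x) π₀ := i2.sub hiZ
    have : ∫ x, (Z x - m x) * (m x - c) ∂π₀
        = (∫ x, Z x * m x ∂π₀) - (∫ x, m x * m x ∂π₀) - c * (∫ x, Z x ∂π₀)
          + c * (∫ x, m x ∂π₀) := by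
      simp_rw [hexp]
      rw [integral_add i1 him, integral_sub i2 hiZ, integral_sub hZm_int hmm_int,
        integral_const_mul, integral_const_mul]
    rw [this, hZm, hintm, ← hcdef]; ring
  -- variance decomposition
  have hD2 : Integrable (fun x => (Z x - m x) ^ 2) π₀ := (hWY.sub hm2).integrable_sq
  have hDm2 : Integrable (fun x => (m x - c) ^ 2) π₀ :=
    (hm2.sub (memLp_const c)).integrable_sq
  have hDcross : Integrable (fun x => (Z x - m x) * (m x - c)) π₀ :=
    CLE.integrable_mul_L2 (hWY.sub hm2) (hm2.sub (memLp_const c))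
  have hvar : variance Z π₀ = ∫ x, (Z x - c) ^ 2 ∂π₀ := by
    rw [variance_eq_integral hWY.aestronglyMeasurable.aemeasurable]
  have hdecomp : variance Z π₀
      = (∫ x, (Z x - m x) ^ 2 ∂π₀) + (∫ x, (m x - c) ^ 2 ∂π₀) := by
    rw [hvar]
    have hexp : ∀ x, (Z x - c) ^ 2
        = (Z x - m x) ^ 2 + (m x - c) ^ 2 + 2 * ((Z x - m x) * (m x - c)) := by
      intro x; ring
    have i3 : Integrable (fun x => (Z x - m x) ^ 2 + (m x - c) ^ 2) π₀ := hD2.add hDm2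
    have i4 : Integrable (fun x => 2 * ((Z x - m x) * (m x - c))) π₀ := hDcross.const_mul 2
    simp_rw [hexp]
    rw [integral_add i3 i4, integral_add hD2 hDm2, integral_const_mul, hcross]
    ring
  have hge : (∫ x, (Z x - m x) ^ 2 ∂π₀) ≤ variance Z π₀ := by
    rw [hdecomp]
    have : 0 ≤ ∫ x, (m x - c) ^ 2 ∂π₀ := integral_nonneg fun x => sq_nonneg _
    linarith
  -- ∫ (Z-m)² = ∫ W² CV
  have hWsq_meas : StronglyMeasurable[mX] (fun x => W x ^ 2) := by
    simpa [sq, Pi.mul_def] using hWmeas.mul hWmeas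
  have hG : Integrable (fun x => (Y x - μY x) ^ 2) π₀ := (hY.sub hμY2).integrable_sq
  have haeD : (fun x => (Z x - m x) ^ 2) =ᵐ[π₀] fun x => W x ^ 2 * (Y x - μY x) ^ 2 := by
    filter_upwards [hpull] with x hx
    rw [hZdef]
    simp only [hx]
    ring
  have hFG : Integrable (fun x => W x ^ 2 * (Y x - μY x) ^ 2) π₀ := hD2.congr haeD
  have hpull2 : π₀[fun x => W x ^ 2 * (Y x - μY x) ^ 2|mX]
      =ᵐ[π₀] fun x => W x ^ 2 * CV x := by
    have := condExp_mul_of_stronglyMeasurable_left (μ := π₀) (m := mX) hWsq_meas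
      (by simpa [Pi.mul_apply, Pi.mul_def] using hFG) hG
    simpa [Pi.mul_apply, Pi.mul_def] using this
  have hDCV : ∫ x, (Z x - m x) ^ 2 ∂π₀ = ∫ x, W x ^ 2 * CV x ∂π₀ := by
    calc ∫ x, (Z x - m x) ^ 2 ∂π₀ = ∫ x, W x ^ 2 * (Y x - μY x) ^ 2 ∂π₀ :=
          integral_congr_ae haeD
      _ = ∫ x, (π₀[fun x => W x ^ 2 * (Y x - μY x) ^ 2|mX]) x ∂π₀ :=
          (integral_condExp hmX).symm
      _ = ∫ x, W x ^ 2 * CV x ∂π₀ := integral_congr_ae hpull2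
  -- final comparison
  have hTm : MeasurableSet[mΩ] T := hmX T hT
  have hCVnn : 0 ≤ᵐ[π₀] CV := condExp_nonneg (ae_of_all _ fun ω => sq_nonneg _)
  have hbound : ∀ᵐ x ∂π₀, T.indicator (fun x => σT ^ 2 * W x ^ 2) x ≤ W x ^ 2 * CV x := by
    filter_upwards [hcond, hCVnn] with x h1 h2
    by_cases hx : x ∈ T
    · rw [Set.indicator_of_mem hx]
      calc σT ^ 2 * W x ^ 2 = W x ^ 2 * σT ^ 2 := by ring
        _ ≤ W x ^ 2 * CV x := mul_le_mul_of_nonneg_left (h1 hx) (sq_nonneg _)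
    · rw [Set.indicator_of_notMem hx]
      exact mul_nonneg (sq_nonneg _) h2
  have hfinal : σT ^ 2 * (∫ x in T, W x ^ 2 ∂π₀) ≤ ∫ x, W x ^ 2 * CV x ∂π₀ := by
    have h1 : σT ^ 2 * (∫ x in T, W x ^ 2 ∂π₀)
        = ∫ x, T.indicator (fun x => σT ^ 2 * W x ^ 2) x ∂π₀ := by
      rw [CLE.integral_indicator' mΩ π₀ hTm, integral_const_mul]
    rw [h1]
    refine integral_mono_of_nonneg ?_ hint hbound
    filter_upwards with x
    exact Set.indicator_nonneg (fun y _ => mul_nonneg (sq_nonneg _) (sq_nonneg _)) x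
  calc σT ^ 2 * (∫ x in T, W x ^ 2 ∂π₀) ≤ ∫ x, W x ^ 2 * CV x ∂π₀ := hfinal
    _ = ∫ x, (Z x - m x) ^ 2 ∂π₀ := hDCV.symm
    _ ≤ variance Z π₀ := hge

lemma CLE.chisq_integral {Ω : Type*} (mΩ : MeasurableSpace Ω)
    (π₀ π' : Measure Ω) [IsProbabilityMeasure π₀] [IsProbabilityMeasure π']
    (hac : π' ≪ π₀)
    (W : Ω → ℝ) (hWdef : W = fun x => (π'.rnDeriv π₀ x).toReal)
    (T : Set Ω) (hTm : MeasurableSet T)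
    (α β : ℝ) (hα : α = (π' T).toReal) (hβ : β = (π₀ T).toReal)
    (hα0 : 0 < α) (hβ0 : 0 < β)
    (πT' πT0 : Measure Ω)
    (hπT' : πT' = (π' T)⁻¹ • π'.restrict T)
    (hπT0 : πT0 = (π₀ T)⁻¹ • π₀.restrict T) :
    ∫ x, ((πT'.rnDeriv πT0 x).toReal) ^ 2 ∂πT0
      = (β / α) ^ 2 * (β⁻¹ * ∫ x in T, W x ^ 2 ∂π₀) := by
  set f : Ω → ENNReal := π'.rnDeriv π₀ with hfdef
  have hfm : Measurable f := π'.measurable_rnDeriv π₀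
  have hβ0' : π₀ T ≠ 0 := by
    intro h; rw [hβ, h] at hβ0; simp at hβ0
  have hβtop : π₀ T ≠ ⊤ := (measure_lt_top π₀ T).ne
  have hα0' : π' T ≠ 0 := by
    intro h; rw [hα, h] at hα0; simp at hα0
  have hαtop : π' T ≠ ⊤ := (measure_lt_top π' T).ne
  have hwd : πT0.withDensity (fun x => (π₀ T * (π' T)⁻¹) * f x) = πT' := by
    calc πT0.withDensity (fun x => (π₀ T * (π' T)⁻¹) * f x)
        = ((π₀ T)⁻¹ • π₀.restrict T).withDensity ((π₀ T * (π' T)⁻¹) • f) := by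
          rw [hπT0]; rfl
      _ = (π₀ T)⁻¹ • ((π₀.restrict T).withDensity ((π₀ T * (π' T)⁻¹) • f)) :=
          withDensity_smul_measure _ _
      _ = (π₀ T)⁻¹ • ((π₀ T * (π' T)⁻¹) • ((π₀.restrict T).withDensity f)) := by
          rw [withDensity_smul _ hfm]
      _ = ((π₀ T)⁻¹ * (π₀ T * (π' T)⁻¹)) • ((π₀.withDensity f).restrict T) := by
          rw [smul_smul, ← restrict_withDensity hTm]
      _ = (π' T)⁻¹ • π'.restrict T := by
          rw [Measure.withDensity_rnDeriv_eq π' π₀ hac, ← mul_assoc,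
            ENNReal.inv_mul_cancel hβ0' hβtop, one_mul]
      _ = πT' := hπT'.symm
  haveI : IsProbabilityMeasure πT0 := by
    constructor
    rw [hπT0]
    simp only [Measure.smul_apply, Measure.restrict_apply MeasurableSet.univ,
      Set.univ_inter, smul_eq_mul]
    exact ENNReal.inv_mul_cancel hβ0' hβtop
  have hrn : πT'.rnDeriv πT0 =ᵐ[πT0] fun x => (π₀ T * (π' T)⁻¹) * f x := by
    rw [← hwd]
    exact Measure.rnDeriv_withDensity πT0 (hfm.const_mul _)
  have hacT0 : πT0 ≪ π₀ := by
    rw [hπT0]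
    intro s hs
    simp only [Measure.smul_apply, smul_eq_mul]
    have hle : π₀.restrict T s ≤ π₀ s := Measure.restrict_apply_le T s
    rw [hs] at hle
    simp [le_antisymm hle zero_le]
  have hflt : ∀ᵐ x ∂π₀, f x < ⊤ := Measure.rnDeriv_lt_top π' π₀
  have hae : ∀ᵐ x ∂πT0, ((πT'.rnDeriv πT0 x).toReal) ^ 2 = (β / α) ^ 2 * W x ^ 2 := by
    filter_upwards [hrn, hflt.filter_mono hacT0.ae_le] with x h1 h2
    rw [h1]
    have h3 : ((π₀ T * (π' T)⁻¹) * f x).toReal = β * α⁻¹ * W x := by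
      rw [ENNReal.toReal_mul, ENNReal.toReal_mul, ENNReal.toReal_inv, hWdef, hβ, hα]
    rw [h3, div_eq_mul_inv]
    ring
  rw [integral_congr_ae hae, integral_const_mul]
  congr 1
  rw [hπT0, integral_smul_measure, ENNReal.toReal_inv, hβ, smul_eq_mul]

/-- Coverage-Limited Efficiency (CLE) lower bound: if `W = W(X) ≥ 0` is `X`-measurable,
`T` is an `X`-measurable event on which the conditional variance of `Y` given `X` is at
least `σ_T² > 0`, then `Var(W·Y) ≥ σ_T² · E[W² 1_T]`.  Combined with the weight
second-moment identity for `W = dπ'/dπ₀` with `α = π'(T)`, `β = π₀(T)`, this gives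
`Var_{π₀}(W·Y) ≥ σ_T² (α²/β)(1 + χ²(π'_T ∥ π₀_T))`. -/
theorem cle_variance_lower_bound {Ω : Type*} {mΩ : MeasurableSpace Ω}
    (π₀ π' : Measure Ω) [IsProbabilityMeasure π₀] [IsProbabilityMeasure π']
    (hac : π' ≪ π₀)
    (mX : MeasurableSpace Ω) (hmX : mX ≤ mΩ)
    (W : Ω → ℝ) (hWdef : W = fun x => (π'.rnDeriv π₀ x).toReal)
    (hWmeas : StronglyMeasurable[mX] W) (hWnn : ∀ x, 0 ≤ W x)
    (Y : Ω → ℝ) (hY : MemLp Y 2 π₀)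
    (hWY : MemLp (fun x => W x * Y x) 2 π₀)
    (T : Set Ω) (hT : MeasurableSet[mX] T)
    (σT : ℝ) (hσ : 0 < σT)
    (hcond : ∀ᵐ x ∂π₀, x ∈ T →
      σT ^ 2 ≤ (π₀[(fun ω => (Y ω - (π₀[Y|mX]) ω) ^ 2)|mX]) x)
    (hint : Integrable
      (fun x => (W x) ^ 2 * (π₀[(fun ω => (Y ω - (π₀[Y|mX]) ω) ^ 2)|mX]) x) π₀)
    (α β : ℝ) (hα : α = (π' T).toReal) (hβ : β = (π₀ T).toReal)
    (hα0 : 0 < α) (hβ0 : 0 < β)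
    (πT' πT0 : @Measure Ω mΩ)
    (hπT' : πT' = (π' T)⁻¹ • π'.restrict T)
    (hπT0 : πT0 = (π₀ T)⁻¹ • π₀.restrict T)
    (hacT : πT' ≪ πT0)
    (hsq : Integrable (fun x => ((πT'.rnDeriv πT0 x).toReal) ^ 2) πT0) :
    σT ^ 2 * (∫ x in T, (W x) ^ 2 ∂π₀) ≤ variance (fun x => W x * Y x) π₀
      ∧ σT ^ 2 * (α ^ 2 / β) *
          (1 + ((∫ x, ((πT'.rnDeriv πT0 x).toReal) ^ 2 ∂πT0) - 1))
        ≤ variance (fun x => W x * Y x) π₀ := by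
  have hpart1 := CLE.part1 π₀ mX hmX W hWmeas Y hY hWY T hT σT hσ hcond hint
  refine ⟨hpart1, ?_⟩
  have hTm : MeasurableSet[mΩ] T := hmX T hT
  have hI := CLE.chisq_integral mΩ π₀ π' hac W hWdef T hTm α β hα hβ hα0 hβ0 πT' πT0 hπT' hπT0
  have hEq : σT ^ 2 * (α ^ 2 / β) *
      (1 + ((∫ x, ((πT'.rnDeriv πT0 x).toReal) ^ 2 ∂πT0) - 1)) = σT ^ 2 * ∫ x in T, W x ^ 2 ∂π₀ := by
    rw [hI]
    field_simp
    ring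
  rw [hEq]
  exact hpart1
end

section
/- At the optimal allocation of the Square Root Law, the calibration variance share ω = (σ_cal²/m*) / (σ_eval²/n* + σ_cal²/m*) equals the oracle budget share c_Y·m* / (c_S·n* + c_Y·m*). -/
/-- Spend-Balance Rule: at the optimal allocation of the Square Root Law, the
calibration variance share `ω = (σ_cal²/m*)/(σ_eval²/n* + σ_cal²/m*)` equals the oracle
budget share `c_Y m*/(c_S n* + c_Y m*)`. -/
theorem spend_balance_rule
    (σeval2 σcal2 cS cY B : ℝ)
    (hσe : 0 < σeval2) (hσc : 0 < σcal2) (hcS : 0 < cS) (hcY : 0 < cY) (hB : 0 < B)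
    (nstar mstar : ℝ)
    (hn : nstar = B * Real.sqrt (σeval2 / cS)
            / (Real.sqrt (cS * σeval2) + Real.sqrt (cY * σcal2)))
    (hm : mstar = B * Real.sqrt (σcal2 / cY)
            / (Real.sqrt (cS * σeval2) + Real.sqrt (cY * σcal2))) :
    (σcal2 / mstar) / (σeval2 / nstar + σcal2 / mstar)
      = cY * mstar / (cS * nstar + cY * mstar) := by
  have ha : (0:ℝ) < Real.sqrt σeval2 := Real.sqrt_pos.2 hσe
  have hb : (0:ℝ) < Real.sqrt σcal2 := Real.sqrt_pos.2 hσc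
  have hc : (0:ℝ) < Real.sqrt cS := Real.sqrt_pos.2 hcS
  have hd : (0:ℝ) < Real.sqrt cY := Real.sqrt_pos.2 hcY
  have ha2 : Real.sqrt σeval2 ^ 2 = σeval2 := Real.sq_sqrt hσe.le
  have hb2 : Real.sqrt σcal2 ^ 2 = σcal2 := Real.sq_sqrt hσc.le
  have hc2 : Real.sqrt cS ^ 2 = cS := Real.sq_sqrt hcS.le
  have hd2 : Real.sqrt cY ^ 2 = cY := Real.sq_sqrt hcY.le
  rw [Real.sqrt_div' _ hcS.le, Real.sqrt_div' _ hcY.le] at *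
  rw [Real.sqrt_mul hcS.le, Real.sqrt_mul hcY.le] at *
  set a := Real.sqrt σeval2
  set b := Real.sqrt σcal2
  set c := Real.sqrt cS
  set d := Real.sqrt cY
  have hden : c * a + d * b > 0 := by positivity
  have hnpos : 0 < nstar := by rw [hn]; positivity
  have hmpos : 0 < mstar := by rw [hm]; positivity
  rw [hn, hm]
  rw [← ha2, ← hb2, ← hc2, ← hd2]
  field_simp
end
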